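/- For integers m ≥ 4 and n ≥ 3, let G_{m,n} be the graph obtained by identifying a vertex of degree 1 of the path P_m with a vertex of the complete graph K_n. If u is a vertex of the complete part of G_{m,n} other than the identified vertex, then γ_gr(G_{m,n} - u) = m; if u is the vertex of degree 1, its neighbor on the path, or the identified vertex, then γ_gr(G_{m,n} - u) = m - 1; and if u is any other vertex of the path part, then γ_gr(G_{m,n} - u) = m - 2. -/

import Mathlib

/-- The closed neighborhood `N[v] = {v} ∪ N(v)` of a vertex. -/
def closedNbhd {V : Type*} (G : SimpleGraph V) (v : V) : Set V :=
  insert v (G.neighborSet v)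

/-- A sequence (list) of pairwise distinct vertices is legal if each vertex
footprints some vertex not dominated by the previous ones. -/
def IsLegalSeq {V : Type*} (G : SimpleGraph V) (l : List V) : Prop :=
  l.Nodup ∧ ∀ i : Fin l.length, ∃ u,
    u ∈ closedNbhd G (l.get i) ∧
    ∀ j : Fin l.length, (j : ℕ) < (i : ℕ) → u ∉ closedNbhd G (l.get j)

/-- A legal dominating sequence. -/
def IsDomSeq {V : Type*} (G : SimpleGraph V) (l : List V) : Prop :=
  IsLegalSeq G l ∧ ∀ u : V, ∃ v ∈ l, u ∈ closedNbhd G v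

/-- The Grundy domination number: the maximum length of a legal dominating sequence. -/
noncomputable def grundyDomNum {V : Type*} (G : SimpleGraph V) : ℕ :=
  sSup {k : ℕ | ∃ l : List V, IsDomSeq G l ∧ l.length = k}

/-- The graph `G_{m,n}` obtained by identifying an endpoint of the path `P_m`
(on vertices `0, …, m-1`) with a vertex of the complete graph `K_n`
(on vertices `m-1, …, m+n-2`). -/
def pathClique (m n : ℕ) : SimpleGraph (Fin (m + n - 1)) :=
  SimpleGraph.fromRel (fun a b =>
    a.val + 1 = b.val ∨ (m - 1 ≤ a.val ∧ m - 1 ≤ b.val))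

namespace GD


open Classical in
lemma mem_closedNbhd {V : Type*} {G : SimpleGraph V} {v u : V} :
    u ∈ closedNbhd G v ↔ u = v ∨ G.Adj v u := by
  simp [closedNbhd, SimpleGraph.mem_neighborSet]

lemma closedNbhd_comm {V : Type*} {G : SimpleGraph V} {v u : V} :
    u ∈ closedNbhd G v ↔ v ∈ closedNbhd G u := by
  simp only [mem_closedNbhd]
  constructor
  · rintro (h | h)
    · exact Or.inl h.symm
    · exact Or.inr h.symm
  · rintro (h | h)
    · exact Or.inl h.symm
    · exact Or.inr h.symm

lemma pathClique_adj {M N : ℕ} {a b : Fin (M + N - 1)} :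
    (pathClique M N).Adj a b ↔ a.val ≠ b.val ∧
      (a.val + 1 = b.val ∨ b.val + 1 = a.val ∨ (M - 1 ≤ a.val ∧ M - 1 ≤ b.val)) := by
  unfold pathClique
  rw [SimpleGraph.fromRel_adj]
  constructor
  · rintro ⟨hne, h⟩
    refine ⟨fun h' => hne (Fin.ext h'), ?_⟩
    tauto
  · rintro ⟨hne, h⟩
    refine ⟨fun h' => hne (congrArg Fin.val h'), ?_⟩
    tauto

lemma mem_closedNbhd_pathClique {M N : ℕ} {v x : Fin (M + N - 1)} :
    x ∈ closedNbhd (pathClique M N) v ↔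
      (x.val = v.val ∨ x.val + 1 = v.val ∨ v.val + 1 = x.val ∨
        (M - 1 ≤ x.val ∧ M - 1 ≤ v.val)) := by
  rw [mem_closedNbhd, pathClique_adj]
  constructor
  · rintro (h | ⟨hne, h⟩)
    · exact Or.inl (congrArg Fin.val h)
    · tauto
  · intro h
    by_cases hx : x.val = v.val
    · exact Or.inl (Fin.ext hx)
    · right
      refine ⟨fun h' => hx h'.symm, ?_⟩
      tauto

/-- A witness function for a legal sequence. -/
structure Witness {V : Type*} (G : SimpleGraph V) (l : List V) where
  w : Fin l.length → V
  mem : ∀ i, w i ∈ closedNbhd G (l.get i)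
  fresh : ∀ i j : Fin l.length, (j : ℕ) < (i : ℕ) → w i ∉ closedNbhd G (l.get j)

noncomputable def witnessOf {V : Type*} {G : SimpleGraph V} {l : List V}
    (hl : IsLegalSeq G l) : Witness G l where
  w i := (hl.2 i).choose
  mem i := (hl.2 i).choose_spec.1
  fresh i j h := (hl.2 i).choose_spec.2 j h

lemma Witness.inj {V : Type*} {G : SimpleGraph V} {l : List V} (W : Witness G l)
    {i j : Fin l.length} (h : W.w i = W.w j) : i = j := by
  rcases lt_trichotomy (i : ℕ) (j : ℕ) with hlt | heq | hlt
  · exact absurd (h ▸ W.mem i) (W.fresh j i hlt)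
  · exact Fin.ext heq
  · exact absurd (h ▸ W.mem j) (W.fresh i j hlt)

/-- A component-closed induced copy of `pathClique M N` inside `G`. -/
structure IsCopy {V : Type*} (G : SimpleGraph V) (M N : ℕ)
    (ι : Fin (M + N - 1) → V) : Prop where
  inj : Function.Injective ι
  adj : ∀ x y, G.Adj (ι x) (ι y) ↔ (pathClique M N).Adj x y
  closed : ∀ x v, G.Adj (ι x) v → ∃ y, ι y = v

lemma IsCopy.mem_closedNbhd_iff {V : Type*} {G : SimpleGraph V} {M N : ℕ}
    {ι : Fin (M + N - 1) → V} (hc : IsCopy G M N ι) {x : Fin (M + N - 1)} {v : V} :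
    v ∈ closedNbhd G (ι x) ↔ ∃ y, ι y = v ∧ y ∈ closedNbhd (pathClique M N) x := by
  rw [mem_closedNbhd]
  constructor
  · rintro (rfl | h)
    · exact ⟨x, rfl, by rw [mem_closedNbhd]; exact Or.inl rfl⟩
    · obtain ⟨y, rfl⟩ := hc.closed x v h
      exact ⟨y, rfl, by rw [mem_closedNbhd]; exact Or.inr ((hc.adj x y).1 h)⟩
  · rintro ⟨y, rfl, hy⟩
    rw [mem_closedNbhd] at hy
    rcases hy with rfl | hy
    · exact Or.inl rfl
    · exact Or.inr ((hc.adj x y).2 hy)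


/-- Main upper-bound lemma: in a legal sequence, at most `M` witnesses lie in a
component-closed copy of `pathClique M N`. -/
lemma card_witness_le_of_copy {V : Type*} {G : SimpleGraph V} {M N : ℕ}
    (hM : 1 ≤ M) (hN : 1 ≤ N)
    {ι : Fin (M + N - 1) → V} (hc : IsCopy G M N ι)
    {l : List V} (hnd : l.Nodup) (W : Witness G l)
    (s : Finset (Fin l.length)) (hs : ∀ i ∈ s, ∃ q, ι q = W.w i) :
    s.card ≤ M := by
  classical
  by_contra hcon
  push_neg at hcon
  -- hcon : M < s.card
  have hfin0 : (0 : ℕ) < M + N - 1 := by omega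
  -- choose preimages of witnesses
  obtain ⟨p, hp⟩ : ∃ p : Fin l.length → Fin (M + N - 1),
      ∀ i ∈ s, ι (p i) = W.w i := by
    refine ⟨fun i => if h : ∃ q, ι q = W.w i then h.choose else ⟨0, hfin0⟩, ?_⟩
    intro i hi
    dsimp only
    rw [dif_pos (hs i hi)]
    exact (hs i hi).choose_spec
  -- choose preimages of the sequence vertices at steps in s
  obtain ⟨y, hy⟩ : ∃ y : Fin l.length → Fin (M + N - 1),
      ∀ i ∈ s, ι (y i) = l.get i ∧ y i ∈ closedNbhd (pathClique M N) (p i) := by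
    have hex : ∀ i ∈ s, ∃ q, ι q = l.get i ∧ q ∈ closedNbhd (pathClique M N) (p i) := by
      intro i hi
      have h1 : l.get i ∈ closedNbhd G (W.w i) := closedNbhd_comm.1 (W.mem i)
      rw [← hp i hi] at h1
      exact hc.mem_closedNbhd_iff.1 h1
    refine ⟨fun i => if h : i ∈ s then (hex i h).choose else ⟨0, hfin0⟩, ?_⟩
    intro i hi
    dsimp only
    rw [dif_pos hi]
    exact (hex i hi).choose_spec
  -- injectivity of p on s
  have hpinj : ∀ i ∈ s, ∀ j ∈ s, p i = p j → i = j := by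
    intro i hi j hj h
    apply W.inj
    rw [← hp i hi, ← hp j hj, h]
  -- injectivity of y on s
  have hyinj : ∀ i ∈ s, ∀ j ∈ s, y i = y j → i = j := by
    intro i hi j hj h
    have hgets : l.get i = l.get j := by
      rw [← (hy i hi).1, ← (hy j hj).1, h]
    exact List.nodup_iff_injective_get.1 hnd hgets
  -- freshness translated to the copy
  have hfresh : ∀ i ∈ s, ∀ j ∈ s, (j : ℕ) < (i : ℕ) →
      p i ∉ closedNbhd (pathClique M N) (y j) := by
    intro i hi j hj hlt hmem
    apply W.fresh i j hlt
    rw [← (hy j hj).1, ← hp i hi]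
    rw [hc.mem_closedNbhd_iff]
    exact ⟨p i, rfl, hmem⟩
  have cliqueMem : ∀ a b : Fin (M + N - 1), M - 1 ≤ a.val → M - 1 ≤ b.val →
      a ∈ closedNbhd (pathClique M N) b := by
    intro a b ha hb
    rw [mem_closedNbhd_pathClique]
    tauto
  -- the three parts of s
  set sBig := s.filter (fun i => M ≤ (p i).val) with hsBig
  set sMid := s.filter (fun i => (p i).val = M - 1) with hsMid
  set sSmall := s.filter (fun i => (p i).val < M - 1) with hsSmall
  -- y i is in the clique whenever p i is a pure clique vertex
  have hyK : ∀ i ∈ s, M ≤ (p i).val → M - 1 ≤ (y i).val := by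
    intro i hi hpi
    have := (hy i hi).2
    rw [mem_closedNbhd_pathClique] at this
    omega
  have hBig : sBig.card ≤ 1 := by
    rw [Finset.card_le_one]
    intro i hi j hj
    rw [hsBig, Finset.mem_filter] at hi hj
    by_contra hne
    rcases lt_trichotomy (i : ℕ) (j : ℕ) with h | h | h
    · exact hfresh j hj.1 i hi.1 h
        (cliqueMem _ _ (by omega) (hyK i hi.1 hi.2))
    · exact hne (Fin.ext h)
    · exact hfresh i hi.1 j hj.1 h
        (cliqueMem _ _ (by omega) (hyK j hj.1 hj.2))
  have hMid : sMid.card ≤ 1 := by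
    rw [Finset.card_le_one]
    intro i hi j hj
    rw [hsMid, Finset.mem_filter] at hi hj
    exact hpinj i hi.1 j hj.1 (Fin.ext (hi.2.trans hj.2.symm))
  have hSmall : sSmall.card ≤ M - 1 := by
    have himg : sSmall.image (fun i => (p i).val) ⊆ Finset.range (M - 1) := by
      intro x hx
      rw [Finset.mem_image] at hx
      obtain ⟨i, hi, rfl⟩ := hx
      rw [hsSmall, Finset.mem_filter] at hi
      exact Finset.mem_range.2 hi.2
    have hcard : (sSmall.image (fun i => (p i).val)).card = sSmall.card := by
      apply Finset.card_image_of_injOn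
      intro i hi j hj h
      simp only [Finset.mem_coe, hsSmall, Finset.mem_filter] at hi hj
      exact hpinj i hi.1 j hj.1 (Fin.ext h)
    calc sSmall.card = (sSmall.image (fun i => (p i).val)).card := hcard.symm
      _ ≤ (Finset.range (M - 1)).card := Finset.card_le_card himg
      _ = M - 1 := Finset.card_range _
  -- s is covered by the three parts
  have hcover : s ⊆ sBig ∪ sMid ∪ sSmall := by
    intro i hi
    rw [Finset.mem_union, Finset.mem_union, hsBig, hsMid, hsSmall,
      Finset.mem_filter, Finset.mem_filter, Finset.mem_filter]
    rcases lt_trichotomy ((p i).val) (M - 1) with h | h | h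
    · exact Or.inr ⟨hi, h⟩
    · exact Or.inl (Or.inr ⟨hi, h⟩)
    · have : (p i).val < M + N - 1 := (p i).isLt
      exact Or.inl (Or.inl ⟨hi, by omega⟩)
  have hcards : s.card ≤ sBig.card + sMid.card + sSmall.card := by
    calc s.card ≤ (sBig ∪ sMid ∪ sSmall).card := Finset.card_le_card hcover
      _ ≤ (sBig ∪ sMid).card + sSmall.card := Finset.card_union_le _ _
      _ ≤ sBig.card + sMid.card + sSmall.card := by
          exact Nat.add_le_add_right (Finset.card_union_le _ _) _
  -- hence all parts are full
  have hBigCard : sBig.card = 1 := by omega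
  have hMidCard : sMid.card = 1 := by omega
  have hSmallCard : sSmall.card = M - 1 := by omega
  -- extract t, the step whose witness is a pure clique vertex
  obtain ⟨t, ht⟩ := Finset.card_pos.1 (by omega : 0 < sBig.card)
  rw [hsBig, Finset.mem_filter] at ht
  have hts : t ∈ s := ht.1
  have htM : M ≤ (p t).val := ht.2
  have hytK : M - 1 ≤ (y t).val := hyK t hts htM
  -- every k ≤ M-1 is attained by p on s
  have hFex : ∀ k, k ≤ M - 1 → ∃ i, i ∈ s ∧ (p i).val = k := by
    intro k hk
    rcases Nat.lt_or_ge k (M - 1) with h | h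
    · -- from sSmall image being all of range (M-1)
      have himg : sSmall.image (fun i => (p i).val) = Finset.range (M - 1) := by
        apply Finset.eq_of_subset_of_card_le
        · intro x hx
          rw [Finset.mem_image] at hx
          obtain ⟨i, hi, rfl⟩ := hx
          rw [hsSmall, Finset.mem_filter] at hi
          exact Finset.mem_range.2 hi.2
        · rw [Finset.card_range]
          rw [Finset.card_image_of_injOn]
          · omega
          · intro i hi j hj hij
            simp only [Finset.mem_coe, hsSmall, Finset.mem_filter] at hi hj
            exact hpinj i hi.1 j hj.1 (Fin.ext hij)
      have : k ∈ sSmall.image (fun i => (p i).val) := by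
        rw [himg]; exact Finset.mem_range.2 h
      rw [Finset.mem_image] at this
      obtain ⟨i, hi, hik⟩ := this
      rw [hsSmall, Finset.mem_filter] at hi
      exact ⟨i, hi.1, hik⟩
    · have hk' : k = M - 1 := by omega
      obtain ⟨i, hi⟩ := Finset.card_pos.1 (by omega : 0 < sMid.card)
      rw [hsMid, Finset.mem_filter] at hi
      exact ⟨i, hi.1, by omega⟩
  obtain ⟨F, hF⟩ : ∃ F : ℕ → Fin l.length,
      ∀ k, k ≤ M - 1 → F k ∈ s ∧ (p (F k)).val = k := by
    refine ⟨fun k => if h : k ≤ M - 1 then (hFex k h).choose else t, ?_⟩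
    intro k hk
    dsimp only
    rw [dif_pos hk]
    exact (hFex k hk).choose_spec
  -- t is not equal to any F k
  have hFt : ∀ k, k ≤ M - 1 → F k ≠ t := by
    intro k hk h
    have := (hF k hk).2
    rw [h] at this
    omega
  -- the cascade
  have cascade : ∀ d, d ≤ M - 1 →
      (∀ e, e ≤ d → 1 ≤ M - 1 - e → (y (F (M - 1 - e))).val = M - 1 - e - 1) ∧
      (M - 1 - d = 0 → False) ∧
      (∀ e, e ≤ d → ((F (M - 1 - e) : ℕ) < (t : ℕ))) := by
    intro d
    induction d with
    | zero =>
      intro _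
      obtain ⟨k, hkdef⟩ : ∃ k, k = M - 1 := ⟨M - 1, rfl⟩
      have hk : k ≤ M - 1 := by omega
      have hFk := hF k hk
      have hord : (F k : ℕ) < (t : ℕ) := by
        rcases lt_trichotomy ((F k : ℕ)) ((t : ℕ)) with h | h | h
        · exact h
        · exact absurd (Fin.ext h) (hFt k hk)
        · exfalso
          have h2 := hFk.2
          exact hfresh (F k) hFk.1 t hts h (cliqueMem _ _ (by omega) hytK)
      have hcontra : M - 1 ≤ (y (F k)).val → False := by
        intro hyk
        have h2 := hFk.2
        exact hfresh t hts (F k) hFk.1 hord (cliqueMem _ _ (by omega) hyk)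
      have hycl : (y (F k)).val + 1 = M - 1 ∨ M - 1 ≤ (y (F k)).val := by
        have hmem := (hy (F k) hFk.1).2
        rw [mem_closedNbhd_pathClique] at hmem
        have h2 := hFk.2
        omega
      refine ⟨?_, ?_, ?_⟩
      · intro e he h1
        have he0 : e = 0 := by omega
        subst he0
        simp only [Nat.sub_zero]
        rw [← hkdef]
        rcases hycl with h | h
        · omega
        · exact absurd h (fun hh => hcontra hh)
      · intro h0
        rcases hycl with h | h
        · omega
        · exact hcontra h
      · intro e he
        have he0 : e = 0 := by omega
        subst he0
        simp only [Nat.sub_zero]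
        rw [← hkdef]
        exact hord
    | succ d ih =>
      intro hd1
      have hd : d ≤ M - 1 := by omega
      obtain ⟨ih1, _, ih3⟩ := ih hd
      obtain ⟨k, hkdef⟩ : ∃ k, k = M - 1 - (d + 1) := ⟨M - 1 - (d + 1), rfl⟩
      have hk : k ≤ M - 1 := by omega
      have hk1 : M - 1 - d = k + 1 := by omega
      have hk1le : k + 1 ≤ M - 1 := by omega
      have hFk := hF k hk
      have hFk1 := hF (k + 1) hk1le
      -- y (F (k+1)) has value k
      have hyk1 : (y (F (k + 1))).val = k := by
        have h5 := ih1 d (le_refl _) (by omega)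
        rw [hk1] at h5
        omega
      -- F k ≠ F (k+1)
      have hFne : F k ≠ F (k + 1) := by
        intro h
        have h1 := hFk.2
        have h2 := hFk1.2
        rw [h] at h1
        omega
      -- ordering F k < F (k+1)
      have hord1 : (F k : ℕ) < (F (k + 1) : ℕ) := by
        rcases lt_trichotomy ((F k : ℕ)) ((F (k + 1) : ℕ)) with h | h | h
        · exact h
        · exact absurd (Fin.ext h) hFne
        · exfalso
          apply hfresh (F k) hFk.1 (F (k + 1)) hFk1.1 h
          rw [mem_closedNbhd_pathClique]
          left
          rw [hFk.2, hyk1]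
      have hordt : (F k : ℕ) < (t : ℕ) := by
        have := ih3 d (le_refl _)
        rw [hk1] at this
        omega
      -- classification of y (F k)
      have hycl : (y (F k)).val = k ∨ (y (F k)).val = k + 1 ∨
          (y (F k)).val + 1 = k := by
        have hmem := (hy (F k) hFk.1).2
        rw [mem_closedNbhd_pathClique] at hmem
        have hkM : k < M - 1 := by omega
        rw [hFk.2] at hmem
        omega
      -- case y (F k) = k is impossible
      have hcase1 : (y (F k)).val ≠ k := by
        intro h
        apply hFne
        apply hyinj (F k) hFk.1 (F (k + 1)) hFk1.1
        exact Fin.ext (by rw [h, hyk1])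
      -- case y (F k) = k + 1 is impossible
      have hcase2 : (y (F k)).val ≠ k + 1 := by
        intro h
        rcases Nat.lt_or_ge (k + 1) (M - 1) with hlt | hge
        · -- use y (F (k+2)) = k + 1
          have hd1' : 1 ≤ d := by omega
          have hk2 : M - 1 - (d - 1) = k + 2 := by omega
          have := ih1 (d - 1) (by omega) (by omega)
          rw [hk2] at this
          -- this : (y (F (k+2))).val = k + 1
          have hne : F k ≠ F (k + 2) := by
            intro hh
            have h1 := hFk.2
            have h2 := (hF (k + 2) (by omega)).2
            rw [hh] at h1
            omega
          apply hne
          apply hyinj (F k) hFk.1 (F (k + 2)) (hF (k + 2) (by omega)).1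
          exact Fin.ext (by omega)
        · -- k + 1 = M - 1 : clique case, contradiction with t
          have hge2 : M - 1 ≤ (y (F k)).val := by omega
          exact hfresh t hts (F k) hFk.1 hordt (cliqueMem _ _ (by omega) hge2)
      refine ⟨?_, ?_, ?_⟩
      · intro e he h1
        rcases Nat.lt_or_ge e (d + 1) with h | h
        · exact ih1 e (by omega) h1
        · have he' : e = d + 1 := by omega
          subst he'
          rw [← hkdef]
          omega
      · intro h0
        have hk0 : k = 0 := by omega
        rcases hycl with h | h | h
        · exact hcase1 h
        · exact hcase2 h
        · omega
      · intro e he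
        rcases Nat.lt_or_ge e (d + 1) with h | h
        · exact ih3 e (by omega)
        · have he' : e = d + 1 := by omega
          subst he'
          rw [← hkdef]
          exact hordt
  have := (cascade (M - 1) (le_refl _)).2.1
  exact this (by omega)


/-- Upper-bound lemma for a path copy: at most `A - 1` witnesses lie in a
component-closed copy of the path `pathClique A 1`. -/
lemma card_witness_le_of_path_copy {V : Type*} {G : SimpleGraph V} {A : ℕ}
    (hA : 2 ≤ A)
    {ι : Fin (A + 1 - 1) → V} (hc : IsCopy G A 1 ι)
    {l : List V} (hnd : l.Nodup) (W : Witness G l)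
    (s : Finset (Fin l.length)) (hs : ∀ i ∈ s, ∃ q, ι q = W.w i) :
    s.card ≤ A - 1 := by
  classical
  by_contra hcon
  push_neg at hcon
  have hfin0 : (0 : ℕ) < A + 1 - 1 := by omega
  obtain ⟨p, hp⟩ : ∃ p : Fin l.length → Fin (A + 1 - 1),
      ∀ i ∈ s, ι (p i) = W.w i := by
    refine ⟨fun i => if h : ∃ q, ι q = W.w i then h.choose else ⟨0, hfin0⟩, ?_⟩
    intro i hi
    dsimp only
    rw [dif_pos (hs i hi)]
    exact (hs i hi).choose_spec
  obtain ⟨y, hy⟩ : ∃ y : Fin l.length → Fin (A + 1 - 1),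
      ∀ i ∈ s, ι (y i) = l.get i ∧ y i ∈ closedNbhd (pathClique A 1) (p i) := by
    have hex : ∀ i ∈ s, ∃ q, ι q = l.get i ∧ q ∈ closedNbhd (pathClique A 1) (p i) := by
      intro i hi
      have h1 : l.get i ∈ closedNbhd G (W.w i) := closedNbhd_comm.1 (W.mem i)
      rw [← hp i hi] at h1
      exact hc.mem_closedNbhd_iff.1 h1
    refine ⟨fun i => if h : i ∈ s then (hex i h).choose else ⟨0, hfin0⟩, ?_⟩
    intro i hi
    dsimp only
    rw [dif_pos hi]
    exact (hex i hi).choose_spec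
  have hpinj : ∀ i ∈ s, ∀ j ∈ s, p i = p j → i = j := by
    intro i hi j hj h
    apply W.inj
    rw [← hp i hi, ← hp j hj, h]
  have hfresh : ∀ i ∈ s, ∀ j ∈ s, (j : ℕ) < (i : ℕ) →
      p i ∉ closedNbhd (pathClique A 1) (y j) := by
    intro i hi j hj hlt hmem
    apply W.fresh i j hlt
    rw [← (hy j hj).1, ← hp i hi]
    rw [hc.mem_closedNbhd_iff]
    exact ⟨p i, rfl, hmem⟩
  -- s is nonempty
  have hne : s.Nonempty := Finset.card_pos.1 (by omega)
  set i₀ := s.min' hne with hi₀def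
  have hi₀s : i₀ ∈ s := s.min'_mem hne
  have hi₀min : ∀ i ∈ s, i₀ ≤ i := fun i hi => s.min'_le i hi
  -- choose z, a vertex of the path copy which is never a witness preimage
  obtain ⟨z, hzmem, hzne⟩ : ∃ z : Fin (A + 1 - 1),
      z ∈ closedNbhd (pathClique A 1) (y i₀) ∧ z ≠ p i₀ := by
    by_cases h : (p i₀).val = (y i₀).val
    · by_cases h0 : (y i₀).val = 0
      · refine ⟨⟨1, by omega⟩, ?_, ?_⟩
        · rw [mem_closedNbhd_pathClique]
          right; right; left
          simp [h0]
        · intro hz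
          have := congrArg Fin.val hz
          simp at this
          omega
      · refine ⟨⟨(y i₀).val - 1, by omega⟩, ?_, ?_⟩
        · rw [mem_closedNbhd_pathClique]
          right; left
          simp
          omega
        · intro hz
          have := congrArg Fin.val hz
          simp at this
          omega
    · refine ⟨y i₀, ?_, ?_⟩
      · rw [mem_closedNbhd_pathClique]
        left; rfl
      · intro hz
        exact h (congrArg Fin.val hz).symm
  -- no witness preimage equals z
  have hznot : ∀ i ∈ s, p i ≠ z := by
    intro i hi hpz
    rcases eq_or_ne i i₀ with rfl | hne'
    · exact hzne hpz.symm
    · have hlt : (i₀ : ℕ) < (i : ℕ) := by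
        have := hi₀min i hi
        have : (i₀ : ℕ) ≤ (i : ℕ) := this
        rcases Nat.lt_or_ge (i₀ : ℕ) (i : ℕ) with h | h
        · exact h
        · exact absurd (Fin.ext (by omega)) hne'
      exact hfresh i hi i₀ hi₀s hlt (hpz ▸ hzmem)
  -- hence the image of p on s avoids z
  have himg : s.image p ⊆ Finset.univ.erase z := by
    intro x hx
    rw [Finset.mem_image] at hx
    obtain ⟨i, hi, rfl⟩ := hx
    exact Finset.mem_erase.2 ⟨hznot i hi, Finset.mem_univ _⟩
  have hcard : s.card ≤ A - 1 := by
    have h1 : (s.image p).card = s.card :=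
      Finset.card_image_of_injOn (fun i hi j hj h => hpinj i hi j hj h)
    have h2 : (Finset.univ.erase z).card = Fintype.card (Fin (A + 1 - 1)) - 1 := by
      rw [Finset.card_erase_of_mem (Finset.mem_univ _), Finset.card_univ]
    have h3 := Finset.card_le_card himg
    rw [h1, h2] at h3
    simpa using h3
  omega



lemma grundyDomNum_eq_of {V : Type*} {G : SimpleGraph V} {k : ℕ}
    (hub : ∀ l, IsDomSeq G l → l.length ≤ k)
    (hlb : ∃ l, IsDomSeq G l ∧ l.length = k) :
    grundyDomNum G = k := by
  unfold grundyDomNum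
  apply le_antisymm
  · apply csSup_le
    · obtain ⟨l, hl, hlen⟩ := hlb
      exact ⟨k, l, hl, hlen⟩
    · rintro b ⟨l, hl, rfl⟩
      exact hub l hl
  · apply le_csSup
    · refine ⟨k, ?_⟩
      rintro b ⟨l, hl, rfl⟩
      exact hub l hl
    · obtain ⟨l, hl, hlen⟩ := hlb
      exact ⟨l, hl, hlen⟩

lemma length_le_of_cover₁ {V : Type*} {G : SimpleGraph V} {l : List V}
    (W : Witness G l) (Q : V → Prop)
    (hcov : ∀ i : Fin l.length, Q (W.w i))
    {b : ℕ}
    (h : ∀ s : Finset (Fin l.length), (∀ i ∈ s, Q (W.w i)) → s.card ≤ b) :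
    l.length ≤ b := by
  classical
  have := h Finset.univ (fun i _ => hcov i)
  simpa using this

lemma length_le_of_cover₂ {V : Type*} {G : SimpleGraph V} {l : List V}
    (W : Witness G l) (Q₁ Q₂ : V → Prop)
    (hcov : ∀ i : Fin l.length, Q₁ (W.w i) ∨ Q₂ (W.w i))
    {b₁ b₂ : ℕ}
    (h₁ : ∀ s : Finset (Fin l.length), (∀ i ∈ s, Q₁ (W.w i)) → s.card ≤ b₁)
    (h₂ : ∀ s : Finset (Fin l.length), (∀ i ∈ s, Q₂ (W.w i)) → s.card ≤ b₂) :
    l.length ≤ b₁ + b₂ := by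
  classical
  set s₁ := Finset.univ.filter (fun i : Fin l.length => Q₁ (W.w i)) with hs₁
  set s₂ := Finset.univ.filter (fun i : Fin l.length => ¬ Q₁ (W.w i)) with hs₂
  have hcard : s₁.card + s₂.card = l.length := by
    rw [hs₁, hs₂, Finset.card_filter_add_card_filter_not]
    simp
  have hb₁ : s₁.card ≤ b₁ := by
    apply h₁
    intro i hi
    rw [hs₁, Finset.mem_filter] at hi
    exact hi.2
  have hb₂ : s₂.card ≤ b₂ := by
    apply h₂
    intro i hi
    rw [hs₂, Finset.mem_filter] at hi
    rcases hcov i with h | h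
    · exact absurd h hi.2
    · exact h
  omega

/-- Construct a component-closed copy inside an induced subgraph of a
`pathClique` from a value-level map. -/
lemma isCopy_of_valMap (m n M N : ℕ) (u : Fin (m + n - 1)) (g : ℕ → ℕ)
    (hlt : ∀ x, x < M + N - 1 → g x < m + n - 1)
    (hne : ∀ x, x < M + N - 1 → g x ≠ u.val)
    (hinj : ∀ x, x < M + N - 1 → ∀ y, y < M + N - 1 → g x = g y → x = y)
    (hadj : ∀ x, x < M + N - 1 → ∀ y, y < M + N - 1 →
      (((g x ≠ g y) ∧ (g x + 1 = g y ∨ g y + 1 = g x ∨ (m - 1 ≤ g x ∧ m - 1 ≤ g y)))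
      ↔ ((x ≠ y) ∧ (x + 1 = y ∨ y + 1 = x ∨ (M - 1 ≤ x ∧ M - 1 ≤ y)))))
    (hclosed : ∀ x, x < M + N - 1 → ∀ w, w < m + n - 1 → w ≠ u.val →
      (g x ≠ w ∧ (g x + 1 = w ∨ w + 1 = g x ∨ (m - 1 ≤ g x ∧ m - 1 ≤ w))) →
      ∃ y, y < M + N - 1 ∧ g y = w) :
    IsCopy ((pathClique m n).induce {v | v ≠ u}) M N
      (fun x => ⟨⟨g x.val, hlt _ x.isLt⟩,
        fun h => hne _ x.isLt (congrArg Fin.val h)⟩) := by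
  constructor
  · intro x y h
    have hval : g x.val = g y.val := congrArg (fun z => (Subtype.val z).val) h
    exact Fin.ext (hinj _ x.isLt _ y.isLt hval)
  · intro x y
    simp only [SimpleGraph.comap_adj, Function.Embedding.coe_subtype]
    rw [pathClique_adj, pathClique_adj]
    simp only [Subtype.coe_mk]
    exact hadj x.val x.isLt y.val y.isLt
  · intro x v hadj'
    simp only [SimpleGraph.comap_adj, Function.Embedding.coe_subtype] at hadj'
    rw [pathClique_adj] at hadj'
    have hv : (v : Fin (m + n - 1)).val ≠ u.val := fun h => v.2 (Fin.ext h)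
    obtain ⟨y, hy1, hy2⟩ := hclosed _ x.isLt _ (v : Fin (m + n - 1)).isLt hv
      ⟨hadj'.1, hadj'.2⟩
    refine ⟨⟨y, hy1⟩, ?_⟩
    apply Subtype.ext
    apply Fin.ext
    exact hy2

/-- The explicit maximum dominating sequence for `pathClique M N`, `N ≥ 2`. -/
lemma domSeq_pathClique (M N : ℕ) (hM : 1 ≤ M) (hN : 2 ≤ N) :
    ∃ l, IsDomSeq (pathClique M N) l ∧ l.length = M := by
  have hfin : ∀ i : Fin M, (if (i : ℕ) < M - 1 then (i : ℕ) else M) < M + N - 1 := by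
    intro i
    split <;> omega
  refine ⟨List.ofFn (fun i : Fin M => ⟨if (i : ℕ) < M - 1 then (i : ℕ) else M, hfin i⟩),
    ⟨⟨?_, ?_⟩, ?_⟩, by simp⟩
  · -- Nodup
    rw [List.nodup_ofFn]
    intro i j h
    have := congrArg Fin.val h
    simp only at this
    apply Fin.ext
    split_ifs at this <;> omega
  · -- legal
    intro i
    have hlen : (List.ofFn (fun i : Fin M =>
        (⟨if (i : ℕ) < M - 1 then (i : ℕ) else M, hfin i⟩ : Fin (M + N - 1)))).length = M := by
      simp
    have hget : ∀ j : Fin (List.ofFn (fun i : Fin M =>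
        (⟨if (i : ℕ) < M - 1 then (i : ℕ) else M, hfin i⟩ : Fin (M + N - 1)))).length,
        ((List.ofFn (fun i : Fin M =>
          (⟨if (i : ℕ) < M - 1 then (i : ℕ) else M, hfin i⟩ : Fin (M + N - 1)))).get j).val
        = if (j : ℕ) < M - 1 then (j : ℕ) else M := by
      intro j
      rw [List.get_ofFn]
      simp
    have hiM : (i : ℕ) < M := by
      have := i.isLt
      omega
    have huval : (if (i : ℕ) = 0 then 0 else if (i : ℕ) < M - 1 then (i : ℕ) + 1 else M)
        < M + N - 1 := by
      split_ifs <;> omega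
    refine ⟨⟨_, huval⟩, ?_, ?_⟩
    · rw [mem_closedNbhd_pathClique, hget i]
      simp only
      split_ifs <;> omega
    · intro j hj hmem
      rw [mem_closedNbhd_pathClique, hget j] at hmem
      simp only at hmem
      have hjM : (j : ℕ) < M := by
        have := j.isLt
        omega
      split_ifs at hmem <;> omega
  · -- dominating
    intro x
    rcases Nat.lt_or_ge x.val (M - 1) with h | h
    · refine ⟨x, ?_, ?_⟩
      · rw [List.mem_ofFn]
        refine ⟨⟨x.val, by omega⟩, ?_⟩
        simp only
        apply Fin.ext
        simp only
        rw [if_pos]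
        exact h
      · rw [mem_closedNbhd_pathClique]
        left; rfl
    · refine ⟨⟨M, by omega⟩, ?_, ?_⟩
      · rw [List.mem_ofFn]
        refine ⟨⟨M - 1, by omega⟩, ?_⟩
        apply Fin.ext
        simp only
        rw [if_neg (by omega)]
      · rw [mem_closedNbhd_pathClique]
        right; right; right
        constructor <;> simp <;> omega

/-- The explicit maximum dominating sequence for the path `pathClique A 1`, `A ≥ 2`. -/
lemma domSeq_path (A : ℕ) (hA : 2 ≤ A) :
    ∃ l, IsDomSeq (pathClique A 1) l ∧ l.length = A - 1 := by
  have hfin : ∀ i : Fin (A - 1), (i : ℕ) < A + 1 - 1 := by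
    intro i
    have := i.isLt
    omega
  refine ⟨List.ofFn (fun i : Fin (A - 1) => (⟨(i : ℕ), hfin i⟩ : Fin (A + 1 - 1))),
    ⟨⟨?_, ?_⟩, ?_⟩, by simp⟩
  · rw [List.nodup_ofFn]
    intro i j h
    have := congrArg Fin.val h
    simp only at this
    exact Fin.ext this
  · intro i
    have hget : ∀ j : Fin (List.ofFn (fun i : Fin (A - 1) =>
        (⟨(i : ℕ), hfin i⟩ : Fin (A + 1 - 1)))).length,
        ((List.ofFn (fun i : Fin (A - 1) =>
          (⟨(i : ℕ), hfin i⟩ : Fin (A + 1 - 1)))).get j).val = (j : ℕ) := by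
      intro j
      rw [List.get_ofFn]
      simp
    have hiA : (i : ℕ) < A - 1 := by
      have := i.isLt
      simpa using this
    have huval : (if (i : ℕ) = 0 then 0 else (i : ℕ) + 1) < A + 1 - 1 := by
      split_ifs <;> omega
    refine ⟨⟨_, huval⟩, ?_, ?_⟩
    · rw [mem_closedNbhd_pathClique, hget i]
      simp only
      split_ifs <;> omega
    · intro j hj hmem
      rw [mem_closedNbhd_pathClique, hget j] at hmem
      simp only at hmem
      have hjA : (j : ℕ) < A - 1 := by
        have := j.isLt
        simpa using this
      split_ifs at hmem <;> omega
  · intro x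
    rcases Nat.lt_or_ge x.val (A - 1) with h | h
    · refine ⟨x, ?_, ?_⟩
      · rw [List.mem_ofFn]
        exact ⟨⟨x.val, h⟩, Fin.ext rfl⟩
      · rw [mem_closedNbhd_pathClique]
        left; rfl
    · refine ⟨⟨A - 2, by omega⟩, ?_, ?_⟩
      · rw [List.mem_ofFn]
        exact ⟨⟨A - 2, by omega⟩, Fin.ext rfl⟩
      · rw [mem_closedNbhd_pathClique]
        have hx : x.val = A - 1 := by
          have := x.isLt
          omega
        right; right; left
        simp only
        omega

/-- The one-vertex graph `pathClique 1 1`. -/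
lemma domSeq_single :
    ∃ l, IsDomSeq (pathClique 1 1) l ∧ l.length = 1 := by
  refine ⟨[⟨0, by omega⟩], ⟨⟨?_, ?_⟩, ?_⟩, rfl⟩
  · simp
  · intro i
    have h1 : (i : ℕ) < 1 := by simpa using i.isLt
    refine ⟨⟨0, by omega⟩, ?_, ?_⟩
    · rw [mem_closedNbhd_pathClique]
      left
      simp [List.get_eq_getElem]
    · intro j hj hmem
      have h2 : (j : ℕ) < 1 := by simpa using j.isLt
      omega
  · intro x
    refine ⟨⟨0, by omega⟩, by simp, ?_⟩
    rw [mem_closedNbhd_pathClique]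
    left
    omega



lemma isLegalSeq_map_of_copy {V : Type*} {G : SimpleGraph V} {M N : ℕ}
    {ι : Fin (M + N - 1) → V} (hc : IsCopy G M N ι)
    {l : List (Fin (M + N - 1))} (h : IsLegalSeq (pathClique M N) l) :
    IsLegalSeq G (l.map ι) := by
  constructor
  · exact h.1.map hc.inj
  · intro i
    have hlen : (l.map ι).length = l.length := List.length_map _
    have hi' : (i : ℕ) < l.length := by rw [← hlen]; exact i.isLt
    obtain ⟨u, hu1, hu2⟩ := h.2 ⟨i.val, hi'⟩
    have hget : ∀ j : Fin (l.map ι).length,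
        (l.map ι).get j = ι (l.get ⟨j.val, by rw [← hlen]; exact j.isLt⟩) := by
      intro j
      simp [List.get_eq_getElem, List.getElem_map]
    refine ⟨ι u, ?_, ?_⟩
    · rw [hget i, hc.mem_closedNbhd_iff]
      exact ⟨u, rfl, hu1⟩
    · intro j hj hmem
      rw [hget j, hc.mem_closedNbhd_iff] at hmem
      obtain ⟨q, hq, hqmem⟩ := hmem
      have hqu : q = u := hc.inj hq
      subst hqu
      exact hu2 ⟨j.val, by rw [← hlen]; exact j.isLt⟩ hj hqmem

lemma isDomSeq_map_of_copy {V : Type*} {G : SimpleGraph V} {M N : ℕ}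
    {ι : Fin (M + N - 1) → V} (hc : IsCopy G M N ι)
    (hcov : ∀ v : V, ∃ q, ι q = v)
    {l : List (Fin (M + N - 1))} (h : IsDomSeq (pathClique M N) l) :
    IsDomSeq G (l.map ι) := by
  refine ⟨isLegalSeq_map_of_copy hc h.1, ?_⟩
  intro v
  obtain ⟨q, rfl⟩ := hcov v
  obtain ⟨x, hx, hxmem⟩ := h.2 q
  refine ⟨ι x, List.mem_map_of_mem hx, ?_⟩
  rw [hc.mem_closedNbhd_iff]
  exact ⟨q, rfl, hxmem⟩

lemma isDomSeq_append_of_copies {V : Type*} {G : SimpleGraph V}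
    {M₁ N₁ M₂ N₂ : ℕ}
    {ι₁ : Fin (M₁ + N₁ - 1) → V} {ι₂ : Fin (M₂ + N₂ - 1) → V}
    (hc₁ : IsCopy G M₁ N₁ ι₁) (hc₂ : IsCopy G M₂ N₂ ι₂)
    (hdisj : ∀ q₁ q₂, ι₁ q₁ ≠ ι₂ q₂)
    (hcov : ∀ v : V, (∃ q, ι₁ q = v) ∨ (∃ q, ι₂ q = v))
    {l₁ : List (Fin (M₁ + N₁ - 1))} {l₂ : List (Fin (M₂ + N₂ - 1))}
    (h₁ : IsDomSeq (pathClique M₁ N₁) l₁) (h₂ : IsDomSeq (pathClique M₂ N₂) l₂) :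
    IsDomSeq G (l₁.map ι₁ ++ l₂.map ι₂) := by
  have hL₁ := isLegalSeq_map_of_copy hc₁ h₁.1
  have hL₂ := isLegalSeq_map_of_copy hc₂ h₂.1
  set L₁ := l₁.map ι₁ with hL₁def
  set L₂ := l₂.map ι₂ with hL₂def
  have hlen : (L₁ ++ L₂).length = L₁.length + L₂.length := List.length_append
  have hgetl : ∀ (j : Fin (L₁ ++ L₂).length) (hj : (j : ℕ) < L₁.length),
      (L₁ ++ L₂).get j = L₁.get ⟨j.val, hj⟩ := by
    intro j hj
    simp only [List.get_eq_getElem]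
    exact List.getElem_append_left hj
  have hgetr : ∀ (j : Fin (L₁ ++ L₂).length) (hj : L₁.length ≤ (j : ℕ)),
      (L₁ ++ L₂).get j = L₂.get ⟨j.val - L₁.length, by
        have := lt_of_lt_of_eq j.isLt hlen; omega⟩ := by
    intro j hj
    simp only [List.get_eq_getElem]
    rw [List.getElem_append_right hj]
  -- membership in L₁ resp. L₂ gives a preimage
  have hmem₁ : ∀ x ∈ L₁, ∃ q, ι₁ q = x := by
    intro x hx
    rw [hL₁def, List.mem_map] at hx
    obtain ⟨q, _, rfl⟩ := hx
    exact ⟨q, rfl⟩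
  have hmem₂ : ∀ x ∈ L₂, ∃ q, ι₂ q = x := by
    intro x hx
    rw [hL₂def, List.mem_map] at hx
    obtain ⟨q, _, rfl⟩ := hx
    exact ⟨q, rfl⟩
  constructor
  constructor
  · -- Nodup
    rw [List.nodup_append]
    refine ⟨hL₁.1, hL₂.1, ?_⟩
    intro x hx₁ y hx₂
    obtain ⟨q₁, rfl⟩ := hmem₁ x hx₁
    obtain ⟨q₂, hq₂⟩ := hmem₂ _ hx₂
    exact fun h => hdisj q₁ q₂ (h.trans hq₂.symm)
  · -- legal
    intro i
    rcases Nat.lt_or_ge (i : ℕ) L₁.length with hi | hi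
    · obtain ⟨u, hu1, hu2⟩ := hL₁.2 ⟨i.val, hi⟩
      refine ⟨u, ?_, ?_⟩
      · rw [hgetl i hi]
        exact hu1
      · intro j hj hmem
        have hjlt : (j : ℕ) < L₁.length := by omega
        rw [hgetl j hjlt] at hmem
        exact hu2 ⟨j.val, hjlt⟩ hj hmem
    · have hilt : (i : ℕ) - L₁.length < L₂.length := by
        have := lt_of_lt_of_eq i.isLt hlen; omega
      obtain ⟨u, hu1, hu2⟩ := hL₂.2 ⟨i.val - L₁.length, hilt⟩
      -- u lies in the second copy
      have hu' : ∃ q, ι₂ q = u := by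
        have hgetmem : L₂.get ⟨i.val - L₁.length, hilt⟩ ∈ L₂ := List.get_mem _ _
        obtain ⟨q, hq⟩ := hmem₂ _ hgetmem
        rw [← hq, hc₂.mem_closedNbhd_iff] at hu1
        obtain ⟨y, hy, _⟩ := hu1
        exact ⟨y, hy⟩
      refine ⟨u, ?_, ?_⟩
      · rw [hgetr i hi]
        exact hu1
      · intro j hj hmem
        rcases Nat.lt_or_ge (j : ℕ) L₁.length with hjlt | hjge
        · rw [hgetl j hjlt] at hmem
          have hgetmem : L₁.get ⟨j.val, hjlt⟩ ∈ L₁ := List.get_mem _ _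
          obtain ⟨q, hq⟩ := hmem₁ _ hgetmem
          rw [← hq, hc₁.mem_closedNbhd_iff] at hmem
          obtain ⟨y, hy, _⟩ := hmem
          obtain ⟨q₂, hq₂⟩ := hu'
          exact hdisj y q₂ (by rw [hy, hq₂])
        · rw [hgetr j hjge] at hmem
          exact hu2 ⟨j.val - L₁.length, by
            have := lt_of_lt_of_eq j.isLt hlen; omega⟩ (by simp only [Fin.val_mk]; omega) hmem
  · -- dominating
    intro v
    rcases hcov v with ⟨q, rfl⟩ | ⟨q, rfl⟩
    · obtain ⟨x, hx, hxmem⟩ := h₁.2 q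
      refine ⟨ι₁ x, List.mem_append_left _ (List.mem_map_of_mem hx), ?_⟩
      rw [hc₁.mem_closedNbhd_iff]
      exact ⟨q, rfl, hxmem⟩
    · obtain ⟨x, hx, hxmem⟩ := h₂.2 q
      refine ⟨ι₂ x, List.mem_append_right _ (List.mem_map_of_mem hx), ?_⟩
      rw [hc₂.mem_closedNbhd_iff]
      exact ⟨q, rfl, hxmem⟩

lemma grundy_of_single_copy {V : Type*} (G : SimpleGraph V) (M N : ℕ)
    (hM : 1 ≤ M) (hN : 2 ≤ N)
    (ι : Fin (M + N - 1) → V) (hc : IsCopy G M N ι)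
    (hcov : ∀ v, ∃ q, ι q = v) :
    grundyDomNum G = M := by
  apply grundyDomNum_eq_of
  · intro l hl
    have W : Witness G l := witnessOf hl.1
    exact length_le_of_cover₁ W (fun v => ∃ q, ι q = v) (fun i => hcov (W.w i))
      (fun s hs => card_witness_le_of_copy hM (by omega) hc hl.1.1 W s hs)
  · obtain ⟨l₀, hdom, hlen⟩ := domSeq_pathClique M N hM hN
    exact ⟨l₀.map ι, isDomSeq_map_of_copy hc hcov hdom, by simp [hlen]⟩

lemma grundy_of_two_copies {V : Type*} (G : SimpleGraph V)
    (M₁ N₁ M₂ N₂ b₁ b₂ : ℕ)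
    (ι₁ : Fin (M₁ + N₁ - 1) → V) (ι₂ : Fin (M₂ + N₂ - 1) → V)
    (hc₁ : IsCopy G M₁ N₁ ι₁) (hc₂ : IsCopy G M₂ N₂ ι₂)
    (hdisj : ∀ q₁ q₂, ι₁ q₁ ≠ ι₂ q₂)
    (hcov : ∀ v, (∃ q, ι₁ q = v) ∨ (∃ q, ι₂ q = v))
    (hub₁ : ∀ (l : List V), l.Nodup → ∀ (W : Witness G l)
      (s : Finset (Fin l.length)), (∀ i ∈ s, ∃ q, ι₁ q = W.w i) → s.card ≤ b₁)
    (hub₂ : ∀ (l : List V), l.Nodup → ∀ (W : Witness G l)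
      (s : Finset (Fin l.length)), (∀ i ∈ s, ∃ q, ι₂ q = W.w i) → s.card ≤ b₂)
    (hlb₁ : ∃ l, IsDomSeq (pathClique M₁ N₁) l ∧ l.length = b₁)
    (hlb₂ : ∃ l, IsDomSeq (pathClique M₂ N₂) l ∧ l.length = b₂) :
    grundyDomNum G = b₁ + b₂ := by
  apply grundyDomNum_eq_of
  · intro l hl
    have W : Witness G l := witnessOf hl.1
    exact length_le_of_cover₂ W (fun v => ∃ q, ι₁ q = v) (fun v => ∃ q, ι₂ q = v)
      (fun i => hcov (W.w i))
      (fun s hs => hub₁ l hl.1.1 W s hs)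
      (fun s hs => hub₂ l hl.1.1 W s hs)
  · obtain ⟨l₁, hdom₁, hlen₁⟩ := hlb₁
    obtain ⟨l₂, hdom₂, hlen₂⟩ := hlb₂
    refine ⟨l₁.map ι₁ ++ l₂.map ι₂,
      isDomSeq_append_of_copies hc₁ hc₂ hdisj hcov hdom₁ hdom₂, ?_⟩
    simp [hlen₁, hlen₂]

lemma caseA (m n : ℕ) (hm : 4 ≤ m) (hn : 3 ≤ n) (u : Fin (m + n - 1))
    (hu : m - 1 < u.val) :
    grundyDomNum ((pathClique m n).induce {v | v ≠ u}) = m := by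
  have hu' : u.val < m + n - 1 := u.isLt
  obtain ⟨ι, hc, hcov⟩ : ∃ ι : Fin (m + (n - 1) - 1) → {v : Fin (m + n - 1) | v ≠ u},
      IsCopy ((pathClique m n).induce {v | v ≠ u}) m (n - 1) ι ∧
      ∀ v, ∃ q, ι q = v := by
    refine ⟨_, isCopy_of_valMap m n m (n - 1) u
      (fun x => if x < u.val then x else x + 1)
      (by intro x hx; split_ifs <;> omega)
      (by intro x hx; split_ifs <;> omega)
      (by intro x hx y hy h; split_ifs at h <;> omega)
      (by intro x hx y hy; split_ifs <;> omega)
      (by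
        intro x hx w hw hwne hcond
        rcases Nat.lt_or_ge w u.val with h | h
        · exact ⟨w, by omega, by rw [if_pos h]⟩
        · refine ⟨w - 1, by omega, ?_⟩
          rw [if_neg (by omega)]
          omega), ?_⟩
    intro v
    have hvne : (v : Fin (m + n - 1)).val ≠ u.val := fun h => v.2 (Fin.ext h)
    have hvlt : (v : Fin (m + n - 1)).val < m + n - 1 := (v : Fin (m + n - 1)).isLt
    rcases Nat.lt_or_ge (v : Fin (m + n - 1)).val u.val with h | h
    · refine ⟨⟨(v : Fin (m + n - 1)).val, by omega⟩, ?_⟩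
      apply Subtype.ext
      apply Fin.ext
      show (if (v : Fin (m + n - 1)).val < u.val then (v : Fin (m + n - 1)).val
        else (v : Fin (m + n - 1)).val + 1) = (v : Fin (m + n - 1)).val
      rw [if_pos h]
    · refine ⟨⟨(v : Fin (m + n - 1)).val - 1, by omega⟩, ?_⟩
      apply Subtype.ext
      apply Fin.ext
      show (if (v : Fin (m + n - 1)).val - 1 < u.val then (v : Fin (m + n - 1)).val - 1
        else (v : Fin (m + n - 1)).val - 1 + 1) = (v : Fin (m + n - 1)).val
      rw [if_neg (by omega)]
      omega
  exact grundy_of_single_copy _ m (n - 1) (by omega) (by omega) ι hc hcov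


lemma case0 (m n : ℕ) (hm : 4 ≤ m) (hn : 3 ≤ n) (u : Fin (m + n - 1))
    (hu : u.val = 0) :
    grundyDomNum ((pathClique m n).induce {v | v ≠ u}) = m - 1 := by
  obtain ⟨ι, hc, hcov⟩ : ∃ ι : Fin ((m - 1) + n - 1) → {v : Fin (m + n - 1) | v ≠ u},
      IsCopy ((pathClique m n).induce {v | v ≠ u}) (m - 1) n ι ∧
      ∀ v, ∃ q, ι q = v := by
    refine ⟨_, isCopy_of_valMap m n (m - 1) n u (fun x => x + 1)
      (by intro x hx; omega)
      (by intro x hx; omega)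
      (by intro x hx y hy h; omega)
      (by intro x hx y hy; omega)
      (by
        intro x hx w hw hwne hcond
        exact ⟨w - 1, by omega, by omega⟩), ?_⟩
    intro v
    have hvne : (v : Fin (m + n - 1)).val ≠ u.val := fun h => v.2 (Fin.ext h)
    have hvlt : (v : Fin (m + n - 1)).val < m + n - 1 := (v : Fin (m + n - 1)).isLt
    refine ⟨⟨(v : Fin (m + n - 1)).val - 1, by omega⟩, ?_⟩
    apply Subtype.ext
    apply Fin.ext
    show (v : Fin (m + n - 1)).val - 1 + 1 = (v : Fin (m + n - 1)).val
    omega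
  have h := grundy_of_single_copy _ (m - 1) n (by omega) (by omega) ι hc hcov
  omega

lemma case1 (m n : ℕ) (hm : 4 ≤ m) (hn : 3 ≤ n) (u : Fin (m + n - 1))
    (hu : u.val = 1) :
    grundyDomNum ((pathClique m n).induce {v | v ≠ u}) = m - 1 := by
  obtain ⟨ι₁, ι₂, hc₁, hc₂, hdisj, hcov⟩ :
      ∃ (ι₁ : Fin (1 + 1 - 1) → {v : Fin (m + n - 1) | v ≠ u})
        (ι₂ : Fin ((m - 2) + n - 1) → {v : Fin (m + n - 1) | v ≠ u}),
      IsCopy ((pathClique m n).induce {v | v ≠ u}) 1 1 ι₁ ∧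
      IsCopy ((pathClique m n).induce {v | v ≠ u}) (m - 2) n ι₂ ∧
      (∀ q₁ q₂, ι₁ q₁ ≠ ι₂ q₂) ∧
      (∀ v, (∃ q, ι₁ q = v) ∨ (∃ q, ι₂ q = v)) := by
    refine ⟨_, _, isCopy_of_valMap m n 1 1 u (fun _ => 0)
      (by intro x hx; omega)
      (by intro x hx; omega)
      (by intro x hx y hy h; omega)
      (by intro x hx y hy; omega)
      (by
        intro x hx w hw hwne hcond
        exfalso
        omega),
      isCopy_of_valMap m n (m - 2) n u (fun x => x + 2)
      (by intro x hx; omega)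
      (by intro x hx; omega)
      (by intro x hx y hy h; omega)
      (by intro x hx y hy; omega)
      (by
        intro x hx w hw hwne hcond
        exact ⟨w - 2, by omega, by omega⟩), ?_, ?_⟩
    · intro q₁ q₂ h
      have := congrArg (fun z => ((z : {v : Fin (m + n - 1) | v ≠ u}) : Fin (m + n - 1)).val) h
      dsimp only at this
      omega
    · intro v
      have hvne : (v : Fin (m + n - 1)).val ≠ u.val := fun h => v.2 (Fin.ext h)
      have hvlt : (v : Fin (m + n - 1)).val < m + n - 1 := (v : Fin (m + n - 1)).isLt
      rcases Nat.lt_or_ge (v : Fin (m + n - 1)).val 1 with h | h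
      · left
        refine ⟨⟨0, by omega⟩, ?_⟩
        apply Subtype.ext
        apply Fin.ext
        show (0 : ℕ) = (v : Fin (m + n - 1)).val
        omega
      · right
        refine ⟨⟨(v : Fin (m + n - 1)).val - 2, by omega⟩, ?_⟩
        apply Subtype.ext
        apply Fin.ext
        show (v : Fin (m + n - 1)).val - 2 + 2 = (v : Fin (m + n - 1)).val
        omega
  have h := grundy_of_two_copies _ 1 1 (m - 2) n 1 (m - 2) ι₁ ι₂ hc₁ hc₂ hdisj hcov
    (fun l hnd W s hs => card_witness_le_of_copy (by omega) (by omega) hc₁ hnd W s hs)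
    (fun l hnd W s hs => card_witness_le_of_copy (by omega) (by omega) hc₂ hnd W s hs)
    domSeq_single
    (domSeq_pathClique (m - 2) n (by omega) (by omega))
  omega

lemma caseM1 (m n : ℕ) (hm : 4 ≤ m) (hn : 3 ≤ n) (u : Fin (m + n - 1))
    (hu : u.val = m - 1) :
    grundyDomNum ((pathClique m n).induce {v | v ≠ u}) = m - 1 := by
  obtain ⟨ι₁, ι₂, hc₁, hc₂, hdisj, hcov⟩ :
      ∃ (ι₁ : Fin ((m - 1) + 1 - 1) → {v : Fin (m + n - 1) | v ≠ u})
        (ι₂ : Fin (1 + (n - 1) - 1) → {v : Fin (m + n - 1) | v ≠ u}),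
      IsCopy ((pathClique m n).induce {v | v ≠ u}) (m - 1) 1 ι₁ ∧
      IsCopy ((pathClique m n).induce {v | v ≠ u}) 1 (n - 1) ι₂ ∧
      (∀ q₁ q₂, ι₁ q₁ ≠ ι₂ q₂) ∧
      (∀ v, (∃ q, ι₁ q = v) ∨ (∃ q, ι₂ q = v)) := by
    refine ⟨_, _, isCopy_of_valMap m n (m - 1) 1 u (fun x => x)
      (by intro x hx; omega)
      (by intro x hx; omega)
      (by intro x hx y hy h; omega)
      (by intro x hx y hy; omega)
      (by
        intro x hx w hw hwne hcond
        exact ⟨w, by omega, rfl⟩),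
      isCopy_of_valMap m n 1 (n - 1) u (fun x => x + m)
      (by intro x hx; omega)
      (by intro x hx; omega)
      (by intro x hx y hy h; omega)
      (by intro x hx y hy; omega)
      (by
        intro x hx w hw hwne hcond
        exact ⟨w - m, by omega, by omega⟩), ?_, ?_⟩
    · intro q₁ q₂ h
      have := congrArg (fun z => ((z : {v : Fin (m + n - 1) | v ≠ u}) : Fin (m + n - 1)).val) h
      dsimp only at this
      have h1 := q₁.isLt
      omega
    · intro v
      have hvne : (v : Fin (m + n - 1)).val ≠ u.val := fun h => v.2 (Fin.ext h)
      have hvlt : (v : Fin (m + n - 1)).val < m + n - 1 := (v : Fin (m + n - 1)).isLt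
      rcases Nat.lt_or_ge (v : Fin (m + n - 1)).val (m - 1) with h | h
      · left
        refine ⟨⟨(v : Fin (m + n - 1)).val, by omega⟩, ?_⟩
        apply Subtype.ext
        apply Fin.ext
        show (v : Fin (m + n - 1)).val = (v : Fin (m + n - 1)).val
        rfl
      · right
        refine ⟨⟨(v : Fin (m + n - 1)).val - m, by omega⟩, ?_⟩
        apply Subtype.ext
        apply Fin.ext
        show (v : Fin (m + n - 1)).val - m + m = (v : Fin (m + n - 1)).val
        omega
  have h := grundy_of_two_copies _ (m - 1) 1 1 (n - 1) (m - 1 - 1) 1 ι₁ ι₂ hc₁ hc₂ hdisj hcov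
    (fun l hnd W s hs => card_witness_le_of_path_copy (by omega) hc₁ hnd W s hs)
    (fun l hnd W s hs => card_witness_le_of_copy (by omega) (by omega) hc₂ hnd W s hs)
    (domSeq_path (m - 1) (by omega))
    (domSeq_pathClique 1 (n - 1) (by omega) (by omega))
  omega

lemma caseMid (m n : ℕ) (hm : 4 ≤ m) (hn : 3 ≤ n) (u : Fin (m + n - 1))
    (hu2 : 2 ≤ u.val) (hum : u.val ≤ m - 2) :
    grundyDomNum ((pathClique m n).induce {v | v ≠ u}) = m - 2 := by
  obtain ⟨ι₁, ι₂, hc₁, hc₂, hdisj, hcov⟩ :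
      ∃ (ι₁ : Fin (u.val + 1 - 1) → {v : Fin (m + n - 1) | v ≠ u})
        (ι₂ : Fin ((m - u.val - 1) + n - 1) → {v : Fin (m + n - 1) | v ≠ u}),
      IsCopy ((pathClique m n).induce {v | v ≠ u}) u.val 1 ι₁ ∧
      IsCopy ((pathClique m n).induce {v | v ≠ u}) (m - u.val - 1) n ι₂ ∧
      (∀ q₁ q₂, ι₁ q₁ ≠ ι₂ q₂) ∧
      (∀ v, (∃ q, ι₁ q = v) ∨ (∃ q, ι₂ q = v)) := by
    refine ⟨_, _, isCopy_of_valMap m n u.val 1 u (fun x => x)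
      (by intro x hx; omega)
      (by intro x hx; omega)
      (by intro x hx y hy h; omega)
      (by intro x hx y hy; omega)
      (by
        intro x hx w hw hwne hcond
        exact ⟨w, by omega, rfl⟩),
      isCopy_of_valMap m n (m - u.val - 1) n u (fun x => x + u.val + 1)
      (by intro x hx; omega)
      (by intro x hx; omega)
      (by intro x hx y hy h; omega)
      (by intro x hx y hy; omega)
      (by
        intro x hx w hw hwne hcond
        exact ⟨w - u.val - 1, by omega, by omega⟩), ?_, ?_⟩
    · intro q₁ q₂ h
      have := congrArg (fun z => ((z : {v : Fin (m + n - 1) | v ≠ u}) : Fin (m + n - 1)).val) h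
      dsimp only at this
      have h1 := q₁.isLt
      omega
    · intro v
      have hvne : (v : Fin (m + n - 1)).val ≠ u.val := fun h => v.2 (Fin.ext h)
      have hvlt : (v : Fin (m + n - 1)).val < m + n - 1 := (v : Fin (m + n - 1)).isLt
      rcases Nat.lt_or_ge (v : Fin (m + n - 1)).val u.val with h | h
      · left
        refine ⟨⟨(v : Fin (m + n - 1)).val, by omega⟩, ?_⟩
        apply Subtype.ext
        apply Fin.ext
        show (v : Fin (m + n - 1)).val = (v : Fin (m + n - 1)).val
        rfl
      · right
        refine ⟨⟨(v : Fin (m + n - 1)).val - u.val - 1, by omega⟩, ?_⟩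
        apply Subtype.ext
        apply Fin.ext
        show (v : Fin (m + n - 1)).val - u.val - 1 + u.val + 1 = (v : Fin (m + n - 1)).val
        omega
  have h := grundy_of_two_copies _ u.val 1 (m - u.val - 1) n (u.val - 1) (m - u.val - 1)
    ι₁ ι₂ hc₁ hc₂ hdisj hcov
    (fun l hnd W s hs => card_witness_le_of_path_copy (by omega) hc₁ hnd W s hs)
    (fun l hnd W s hs => card_witness_le_of_copy (by omega) (by omega) hc₂ hnd W s hs)
    (domSeq_path u.val (by omega))
    (domSeq_pathClique (m - u.val - 1) n (by omega) (by omega))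
  omega

end GD

theorem grundy_pathClique_vertex_deletion (m n : ℕ) (hm : 4 ≤ m) (hn : 3 ≤ n) :
    (∀ u : Fin (m + n - 1), m - 1 < u.val →
      grundyDomNum ((pathClique m n).induce {v | v ≠ u}) = m) ∧
    (∀ u : Fin (m + n - 1), (u.val = 0 ∨ u.val = 1 ∨ u.val = m - 1) →
      grundyDomNum ((pathClique m n).induce {v | v ≠ u}) = m - 1) ∧
    (∀ u : Fin (m + n - 1), 2 ≤ u.val → u.val ≤ m - 2 →
      grundyDomNum ((pathClique m n).induce {v | v ≠ u}) = m - 2) := by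
  refine ⟨?_, ?_, ?_⟩
  · intro u hu
    exact GD.caseA m n hm hn u hu
  · intro u hu
    rcases hu with h | h | h
    · exact GD.case0 m n hm hn u h
    · exact GD.case1 m n hm hn u h
    · exact GD.caseM1 m n hm hn u h
  · intro u h2 hm2
    exact GD.caseMid m n hm hn u h2 hm2
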